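/- Let G be a 2-group with smooth generating sequence (g₁, ..., g_k), and H ≤ G a subgroup of index 2. Let j = min{i : g_i ∉ H}, τ = g_j, and define β_i = g_i if g_i ∈ H and β_i = τ⁻¹ g_i otherwise. Then (β₁, ..., β_k) is a smooth generating sequence for H. -/

import Mathlib

open scoped Classical

private lemma my_relindex_ne_zero {G : Type*} [Group G] [Fintype G] (A B : Subgroup G) :
    A.relIndex B ≠ 0 :=
  Subgroup.index_ne_zero_of_finite

private lemma my_step_mem {G : Type*} [Group G] [Fintype G] (K K' : Subgroup G)
    (hrel : K.relIndex K' ≤ 2) (y : G) (hyK' : y ∈ K')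
    (hgen : K' ≤ K ⊔ Subgroup.closure {y}) {z : G} (hz : z ∈ K') :
    z ∈ K ∨ y⁻¹ * z ∈ K := by
  have hne := my_relindex_ne_zero K K'
  have hcases : K.relIndex K' = 1 ∨ K.relIndex K' = 2 := by omega
  rcases hcases with h | h
  · left
    exact Subgroup.relIndex_eq_one.mp h hz
  · -- index two case
    have hyK : y ∉ K := by
      intro hyK
      have : K' ≤ K := by
        refine hgen.trans (sup_le le_rfl ?_)
        rwa [Subgroup.closure_le, Set.singleton_subset_iff]
      rw [Subgroup.relIndex_eq_one.mpr this] at h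
      omega
    have h2 : (K.subgroupOf K').index = 2 := h
    by_cases hzK : z ∈ K
    · exact Or.inl hzK
    · right
      have := (Subgroup.mul_mem_iff_of_index_two h2
        (a := (⟨y, hyK'⟩ : K')⁻¹) (b := ⟨z, hz⟩)).mpr ?_
      · simpa [Subgroup.mem_subgroupOf] using this
      · simp only [Subgroup.mem_subgroupOf]
        simp only [InvMemClass.coe_inv, inv_mem_iff]
        exact iff_of_false hyK hzK

private lemma my_step_inf {G : Type*} [Group G] [Fintype G] (H K K' L : Subgroup G)
    (hL : L = K ⊓ H) (hKK' : K ≤ K') (hrel : K.relIndex K' ≤ 2)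
    (b : G) (hb : b ∈ H) (hbK' : b ∈ K') (hgen : K' ≤ K ⊔ Subgroup.closure {b}) :
    L ⊔ Subgroup.closure {b} = K' ⊓ H := by
  apply le_antisymm
  · refine sup_le ?_ ?_
    · rw [hL]; exact inf_le_inf_right H hKK'
    · rw [Subgroup.closure_le, Set.singleton_subset_iff]
      exact ⟨hbK', hb⟩
  · rintro z ⟨hzK', hzH⟩
    rcases my_step_mem K K' hrel b hbK' hgen hzK' with hzK | hzK
    · have : z ∈ L := by rw [hL]; exact ⟨hzK, hzH⟩
      exact (le_sup_left : L ≤ L ⊔ Subgroup.closure {b}) this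
    · have hbz : b⁻¹ * z ∈ L := by
        rw [hL]; exact ⟨hzK, H.mul_mem (H.inv_mem hb) hzH⟩
      have hb' : b ∈ L ⊔ Subgroup.closure {b} :=
        (le_sup_right : Subgroup.closure {b} ≤ _) (Subgroup.subset_closure rfl)
      have : z = b * (b⁻¹ * z) := by group
      rw [this]
      exact mul_mem hb' ((le_sup_left : L ≤ _) hbz)

private lemma my_relindex_inf {G : Type*} [Group G] [Fintype G]
    (H A B : Subgroup G) (hAB : A ≤ B) :
    (A ⊓ H).relIndex (B ⊓ H) ≤ A.relIndex B := by
  have h1 : (A ⊓ H) ⊓ (B ⊓ H) = A ⊓ (B ⊓ H) := by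
    rw [inf_of_le_left (inf_le_inf_right H hAB), ← inf_assoc, inf_of_le_left hAB]
  calc (A ⊓ H).relIndex (B ⊓ H)
      = ((A ⊓ H) ⊓ (B ⊓ H)).relIndex (B ⊓ H) := (Subgroup.inf_relIndex_right _ _).symm
    _ = (A ⊓ (B ⊓ H)).relIndex (B ⊓ H) := by rw [h1]
    _ = A.relIndex (B ⊓ H) := Subgroup.inf_relIndex_right _ _
    _ ≤ A.relIndex B :=
        Subgroup.relIndex_le_of_le_right inf_le_left (my_relindex_ne_zero A B)

set_option maxHeartbeats 2000000 in
theorem sgs_of_index_two_subgroup {G : Type*} [Group G] [Fintype G]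
    (hG : IsPGroup 2 G) (k : ℕ) (g : Fin k → G)
    (hgen : Subgroup.closure (Set.range g) = ⊤)
    (hsmooth : ∀ i : ℕ, i < k →
      (Subgroup.closure {x : G | ∃ j : Fin k, (j : ℕ) < i ∧ x = g j}).relIndex
        (Subgroup.closure {x : G | ∃ j : Fin k, (j : ℕ) < i + 1 ∧ x = g j}) ≤ 2)
    (H : Subgroup G) (hH : H.index = 2)
    (j : Fin k) (hj : g j ∉ H) (hjmin : ∀ i : Fin k, g i ∉ H → j ≤ i)
    (β : Fin k → G) (hβ : ∀ i : Fin k, β i = if g i ∈ H then g i else (g j)⁻¹ * g i) :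
    Subgroup.closure (Set.range β) = H ∧
      ∀ i : ℕ, i < k →
        (Subgroup.closure {x : G | ∃ j' : Fin k, (j' : ℕ) < i ∧ x = β j'}).relIndex
          (Subgroup.closure {x : G | ∃ j' : Fin k, (j' : ℕ) < i + 1 ∧ x = β j'}) ≤ 2 := by
  -- the set of the first `i` values of a sequence
  have hinsert : ∀ (f : Fin k → G) (i : ℕ) (hik : i < k),
      {x : G | ∃ j' : Fin k, (j' : ℕ) < i + 1 ∧ x = f j'}
        = insert (f ⟨i, hik⟩) {x : G | ∃ j' : Fin k, (j' : ℕ) < i ∧ x = f j'} := by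
    intro f i hik
    ext x
    simp only [Set.mem_setOf_eq, Set.mem_insert_iff]
    constructor
    · rintro ⟨j', hj', rfl⟩
      rcases Nat.lt_succ_iff_lt_or_eq.mp hj' with h | h
      · exact Or.inr ⟨j', h, rfl⟩
      · refine Or.inl (congrArg f (Fin.ext ?_))
        exact h
    · rintro (rfl | ⟨j', hj', rfl⟩)
      · exact ⟨⟨i, hik⟩, Nat.lt_succ_self i, rfl⟩
      · exact ⟨j', Nat.lt_succ_of_lt hj', rfl⟩
  have hsucc : ∀ (f : Fin k → G) (i : ℕ) (hik : i < k),
      Subgroup.closure {x : G | ∃ j' : Fin k, (j' : ℕ) < i + 1 ∧ x = f j'}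
        = Subgroup.closure {x : G | ∃ j' : Fin k, (j' : ℕ) < i ∧ x = f j'}
            ⊔ Subgroup.closure {f ⟨i, hik⟩} := by
    intro f i hik
    rw [hinsert f i hik, Set.insert_eq, Subgroup.closure_union, sup_comm]
  have hmono : ∀ (f : Fin k → G) (i : ℕ),
      Subgroup.closure {x : G | ∃ j' : Fin k, (j' : ℕ) < i ∧ x = f j'}
        ≤ Subgroup.closure {x : G | ∃ j' : Fin k, (j' : ℕ) < i + 1 ∧ x = f j'} := by
    intro f i
    apply Subgroup.closure_mono
    rintro x ⟨j', hj', rfl⟩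
    exact ⟨j', Nat.lt_succ_of_lt hj', rfl⟩
  have hrange : ∀ (f : Fin k → G),
      {x : G | ∃ j' : Fin k, (j' : ℕ) < k ∧ x = f j'} = Set.range f := by
    intro f
    ext x
    simp only [Set.mem_setOf_eq, Set.mem_range]
    constructor
    · rintro ⟨j', _, rfl⟩; exact ⟨j', rfl⟩
    · rintro ⟨j', rfl⟩; exact ⟨j', j'.isLt, rfl⟩
  -- the main inductive claim
  have main : ∀ i : ℕ, i ≤ k →
      Subgroup.closure {x : G | ∃ j' : Fin k, (j' : ℕ) < i ∧ x = β j'}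
        = Subgroup.closure {x : G | ∃ j' : Fin k, (j' : ℕ) < i ∧ x = g j'} ⊓ H := by
    intro i
    induction i with
    | zero =>
      intro _
      have he : ∀ (f : Fin k → G),
          {x : G | ∃ j' : Fin k, (j' : ℕ) < 0 ∧ x = f j'} = (∅ : Set G) := by
        intro f; ext x; simp
      rw [he β, he g, Subgroup.closure_empty, bot_inf_eq]
    | succ n ih =>
      intro hnk
      have hn : n < k := hnk
      have hLK := ih hn.le
      have hrel := hsmooth n hn
      have hKmono := hmono g n
      have hxK' : g ⟨n, hn⟩ ∈
          Subgroup.closure {x : G | ∃ j' : Fin k, (j' : ℕ) < n + 1 ∧ x = g j'} :=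
        Subgroup.subset_closure ⟨⟨n, hn⟩, Nat.lt_succ_self n, rfl⟩
      rw [hsucc β n hn]
      by_cases hx : g ⟨n, hn⟩ ∈ H
      · -- new generator already lies in H
        have hb : β ⟨n, hn⟩ = g ⟨n, hn⟩ := by rw [hβ ⟨n, hn⟩, if_pos hx]
        rw [hb]
        exact my_step_inf H _ _ _ hLK hKmono hrel _ hx hxK' (hsucc g n hn).le
      · -- new generator not in H
        have hb : β ⟨n, hn⟩ = (g j)⁻¹ * g ⟨n, hn⟩ := by rw [hβ ⟨n, hn⟩, if_neg hx]
        have hjn : (j : ℕ) ≤ n := hjmin ⟨n, hn⟩ hx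
        rcases lt_or_eq_of_le hjn with hjlt | hjeq
        · -- τ already among the previous generators
          have hτK : g j ∈
              Subgroup.closure {x : G | ∃ j' : Fin k, (j' : ℕ) < n ∧ x = g j'} :=
            Subgroup.subset_closure ⟨j, hjlt, rfl⟩
          have hbH : β ⟨n, hn⟩ ∈ H := by
            rw [hb, Subgroup.mul_mem_iff_of_index_two hH]
            exact iff_of_false (fun h => hj (H.inv_mem_iff.mp h)) hx
          have hbK' : β ⟨n, hn⟩ ∈
              Subgroup.closure {x : G | ∃ j' : Fin k, (j' : ℕ) < n + 1 ∧ x = g j'} := by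
            rw [hb]
            exact mul_mem (inv_mem (hKmono hτK)) hxK'
          refine my_step_inf H _ _ _ hLK hKmono hrel _ hbH hbK' ?_
          refine (hsucc g n hn).le.trans (sup_le le_sup_left ?_)
          rw [Subgroup.closure_le, Set.singleton_subset_iff]
          have hxe : g ⟨n, hn⟩ = g j * β ⟨n, hn⟩ := by rw [hb]; group
          rw [hxe]
          exact mul_mem (Subgroup.mem_sup_left hτK)
            (Subgroup.mem_sup_right (Subgroup.subset_closure rfl))
        · -- this is the step where τ itself appears: j = n
          have hjfin : j = ⟨n, hn⟩ := Fin.ext hjeq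
          have hb1 : β ⟨n, hn⟩ = 1 := by rw [hb, ← hjfin, inv_mul_cancel]
          rw [hb1, Subgroup.closure_singleton_one, sup_bot_eq]
          -- all earlier generators are in H
          have hKnH : Subgroup.closure {x : G | ∃ j' : Fin k, (j' : ℕ) < n ∧ x = g j'}
              ≤ H := by
            rw [Subgroup.closure_le]
            rintro x ⟨j', hj', rfl⟩
            by_contra hxH
            have := hjmin j' hxH
            have : (j : ℕ) ≤ (j' : ℕ) := this
            omega
          rw [hLK, inf_of_le_left hKnH]
          apply le_antisymm
          · exact le_inf hKmono hKnH
          · rintro z ⟨hz1, hz2⟩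
            rcases my_step_mem _ _ hrel (g ⟨n, hn⟩) hxK'
                (hsucc g n hn).le hz1 with hzK | hzK
            · exact hzK
            · exfalso
              apply hx
              have h1 : (g ⟨n, hn⟩)⁻¹ * z ∈ H := hKnH hzK
              have h2 : (g ⟨n, hn⟩)⁻¹ ∈ H := by
                have := H.mul_mem h1 (H.inv_mem hz2)
                simpa using this
              exact H.inv_mem_iff.mp h2
  constructor
  · have := main k le_rfl
    rw [hrange β, hrange g, hgen, top_inf_eq] at this
    exact this
  · intro i hik
    rw [main i hik.le, main (i + 1) hik]
    exact (my_relindex_inf H _ _ (hmono g i)).trans (hsmooth i hik)
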